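/- There exists (in ZFC) a set of reals which has the Menger property Ufin(O,O) but does not have the Hurewicz property Ufin(O,Γ). -/

import Mathlib

open Filter Set Cardinal

/-- The Rothberger property `S1(O,O)`: for every sequence of open covers one can select one
member from each so that the selections form a cover. -/
def RothbergerProp (X : Type*) [TopologicalSpace X] : Prop :=
  ∀ U : ℕ → Set (Set X),
    (∀ n, (∀ s ∈ U n, IsOpen s) ∧ ⋃₀ U n = Set.univ) →
    ∃ f : ℕ → Set X, (∀ n, f n ∈ U n) ∧ (⋃ n, f n) = Set.univ

/-- The Hurewicz property `Ufin(O,Γ)`: for every sequence of open covers one can select finite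
subfamilies whose unions form a γ-cover (every point is in all but finitely many of them). -/
def HurewiczProp (X : Type*) [TopologicalSpace X] : Prop :=
  ∀ U : ℕ → Set (Set X),
    (∀ n, (∀ s ∈ U n, IsOpen s) ∧ ⋃₀ U n = Set.univ) →
    ∃ F : ℕ → Set (Set X), (∀ n, F n ⊆ U n ∧ (F n).Finite) ∧
      ∀ x : X, ∀ᶠ n in atTop, x ∈ ⋃₀ F n

/-- The Menger property `Ufin(O,O)`. -/
def MengerProp (X : Type*) [TopologicalSpace X] : Prop :=
  ∀ U : ℕ → Set (Set X),
    (∀ n, (∀ s ∈ U n, IsOpen s) ∧ ⋃₀ U n = Set.univ) →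
    ∃ F : ℕ → Set (Set X), (∀ n, F n ⊆ U n ∧ (F n).Finite) ∧
      (⋃ n, ⋃₀ F n) = Set.univ

/-- The Gerlits–Nagy property `(*)_GN` = Rothberger + Hurewicz
(Kočinac–Scheepers characterization). -/
def GerlitsNagy (X : Type*) [TopologicalSpace X] : Prop :=
  RothbergerProp X ∧ HurewiczProp X

/-- Strong measure zero: for every sequence of positive reals `ε n` there is a cover
`A n` with `diam (A n) < ε n`. -/
def StrongMeasureZero (X : Type*) [PseudoMetricSpace X] : Prop :=
  ∀ ε : ℕ → ℝ, (∀ n, 0 < ε n) →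
    ∃ A : ℕ → Set X, (⋃ n, A n) = Set.univ ∧ ∀ n, EMetric.diam (A n) < ENNReal.ofReal (ε n)

/-- The bounding number `b`: least cardinality of an unbounded family in `(ℕ → ℕ, ≤*)`. -/
noncomputable def boundingNumber : Cardinal :=
  sInf { c : Cardinal | ∃ F : Set (ℕ → ℕ), #F = c ∧
    ∀ g : ℕ → ℕ, ∃ f ∈ F, ¬ ∀ᶠ n in atTop, f n ≤ g n }

/-- `cov(M)`: least cardinality of a family of meager sets of reals covering `ℝ`. -/
noncomputable def covMeager : Cardinal :=
  sInf { c : Cardinal | ∃ S : Set (Set ℝ), #S = c ∧ (∀ A ∈ S, IsMeagre A) ∧ ⋃₀ S = Set.univ }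

/-- `add(M)`: least cardinality of a family of meager sets of reals whose union is not meager. -/
noncomputable def addMeager : Cardinal :=
  sInf { c : Cardinal | ∃ S : Set (Set ℝ), #S = c ∧ (∀ A ∈ S, IsMeagre A) ∧ ¬ IsMeagre (⋃₀ S) }

/-- An ω-cover: `Set.univ ∉ U` and every finite set is contained in some member of `U`. -/
def IsOmegaCover {X : Type*} (U : Set (Set X)) : Prop :=
  Set.univ ∉ U ∧ ∀ F : Set X, F.Finite → ∃ u ∈ U, F ⊆ u

/-- A γ-cover: an infinite family such that every point belongs to all but finitely many members. -/
def IsGammaCover {X : Type*} (U : Set (Set X)) : Prop :=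
  U.Infinite ∧ ∀ x : X, {u ∈ U | x ∉ u}.Finite

/-- A family `U` is groupable (`U ∈ Ω^gp`) if it admits a partition into finite sets such that
every finite `F ⊆ X` is contained in a member of all but finitely many pieces. -/
def IsGroupable {X : Type*} (U : Set (Set X)) : Prop :=
  ∃ P : Set (Set (Set X)),
    (∀ G ∈ P, G.Finite ∧ G.Nonempty) ∧ P.PairwiseDisjoint id ∧ ⋃₀ P = U ∧
    ∀ F : Set X, F.Finite → {G ∈ P | ¬ ∃ u ∈ G, F ⊆ u}.Finite

/-- The selection property `S1(Ω, Ω^gp)`. -/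
def S1OmegaOmegaGp (X : Type*) [TopologicalSpace X] : Prop :=
  ∀ U : ℕ → Set (Set X),
    (∀ n, (∀ s ∈ U n, IsOpen s) ∧ IsOmegaCover (U n)) →
    ∃ f : ℕ → Set X, (∀ n, f n ∈ U n) ∧
      IsOmegaCover (Set.range f) ∧ IsGroupable (Set.range f)

/-- A γ-set: every open ω-cover contains a γ-subcover. -/
def IsGammaSet (X : Type*) [TopologicalSpace X] : Prop :=
  ∀ U : Set (Set X), (∀ s ∈ U, IsOpen s) → IsOmegaCover U →
    ∃ V ⊆ U, IsGammaCover V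

namespace MNH

open scoped Classical

/-- Eventual domination `f ≤* g`. -/
def EvLE (f g : ℕ → ℕ) : Prop := ∀ᶠ n in Filter.atTop, f n ≤ g n

lemma EvLE.trans'' {f g h : ℕ → ℕ} (h1 : EvLE f g) (h2 : EvLE g h) : EvLE f h :=
  (h1.and h2).mono fun _ hp => hp.1.trans hp.2

/-- A dominating family. -/
def Dom (D : Set (ℕ → ℕ)) : Prop := ∀ g : ℕ → ℕ, ∃ f ∈ D, EvLE g f

/-- The dominating number. -/
noncomputable def dd : Cardinal := sInf {c | ∃ D : Set (ℕ → ℕ), Dom D ∧ #D = c}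

lemma dd_set_nonempty : {c | ∃ D : Set (ℕ → ℕ), Dom D ∧ #D = c}.Nonempty :=
  ⟨#(Set.univ : Set (ℕ → ℕ)), Set.univ,
    fun g => ⟨g, Set.mem_univ g, Filter.Eventually.of_forall fun _ => le_rfl⟩, rfl⟩

lemma exists_dom_card : ∃ D : Set (ℕ → ℕ), Dom D ∧ #D = dd := csInf_mem dd_set_nonempty

lemma dd_le_of_dom {D : Set (ℕ → ℕ)} (h : Dom D) : dd ≤ #D := csInf_le' ⟨D, h, rfl⟩

lemma not_dom_of_lt {D : Set (ℕ → ℕ)} (h : #D < dd) : ¬ Dom D :=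
  fun hd => absurd (dd_le_of_dom hd) (not_le.2 h)

lemma aleph0_le_dd : Cardinal.aleph0 ≤ dd := by
  refine le_csInf dd_set_nonempty ?_
  rintro c ⟨D, hD, rfl⟩
  by_contra hlt
  push_neg at hlt
  have hfin : D.Finite := Cardinal.lt_aleph0_iff_set_finite.mp hlt
  classical
  obtain ⟨f, hfD, hf⟩ := hD (fun n => (hfin.toFinset.sup fun h => h n) + 1)
  obtain ⟨n, hn⟩ := hf.exists
  have hle : f n ≤ hfin.toFinset.sup fun h => h n :=
    Finset.le_sup (f := fun h => h n) (hfin.mem_toFinset.mpr hfD)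
  have hn' : (hfin.toFinset.sup fun h => h n) + 1 ≤ f n := hn
  exact Nat.not_succ_le_self _ (hn'.trans hle)

/-! ### Partial sums and the embedding into ℝ -/

/-- `SS u k = ∑_{i<k} (u i + 1)`. -/
def SS (u : ℕ → ℕ) (k : ℕ) : ℕ := ∑ i ∈ Finset.range k, (u i + 1)

lemma SS_succ (u : ℕ → ℕ) (k : ℕ) : SS u (k+1) = SS u k + (u k + 1) :=
  Finset.sum_range_succ _ _

lemma le_SS (u : ℕ → ℕ) : ∀ k, k ≤ SS u k
  | 0 => Nat.zero_le _
  | (k+1) => by have := le_SS u k; rw [SS_succ]; omega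

lemma lt_SS (u : ℕ → ℕ) (n : ℕ) : u n < SS u (n+1) := by
  rw [SS_succ]; omega

lemma SS_congr {u v : ℕ → ℕ} {k : ℕ} (h : ∀ i < k, u i = v i) : SS u k = SS v k :=
  Finset.sum_congr rfl fun i hi => by rw [h i (Finset.mem_range.mp hi)]

lemma SS_add_le (u : ℕ → ℕ) (k : ℕ) : ∀ j, SS u k + j ≤ SS u (k + j)
  | 0 => le_rfl
  | (j+1) => by
      have := SS_add_le u k j
      have h2 := SS_succ u (k+j)
      have : SS u (k + (j+1)) = SS u (k+j) + (u (k+j) + 1) := by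
        rw [show k + (j+1) = (k+j)+1 from rfl, SS_succ]
      omega

lemma SS_mono (u : ℕ → ℕ) {k l : ℕ} (h : k ≤ l) : SS u k ≤ SS u l := by
  have := SS_add_le u k (l - k)
  rw [show k + (l - k) = l from by omega] at this
  omega

lemma summable_pow_le (c : ℕ → ℕ) (hc : ∀ k, k + 1 ≤ c k) :
    Summable (fun k => ((1:ℝ)/3) ^ (c k)) := by
  have hgeo : Summable fun k : ℕ => ((1:ℝ)/3)^k :=
    summable_geometric_of_lt_one (by norm_num) (by norm_num)
  refine Summable.of_nonneg_of_le (fun k => by positivity)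
    (fun k => pow_le_pow_of_le_one (by norm_num) (by norm_num) (hc k)) ?_
  simpa [pow_succ] using hgeo.mul_right ((1:ℝ)/3)

/-- The embedding of `ℕ → ℕ` into `ℝ`. -/
noncomputable def emb (u : ℕ → ℕ) : ℝ := ∑' k, ((1:ℝ)/3) ^ (SS u (k+1))

lemma emb_summable (u : ℕ → ℕ) : Summable (fun k => ((1:ℝ)/3) ^ (SS u (k+1))) :=
  summable_pow_le _ (fun k => le_SS u (k+1))

lemma tail_summable (u : ℕ → ℕ) (K : ℕ) :
    Summable (fun k => ((1:ℝ)/3) ^ (SS u (k+K+1))) :=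
  summable_pow_le _ (fun k => by have := le_SS u (k+K+1); omega)

lemma geom_tail_le (c : ℕ → ℕ) (B : ℕ) (hc : ∀ k, B + k + 1 ≤ c k) :
    ∑' k, ((1:ℝ)/3) ^ (c k) ≤ (1/2) * ((1:ℝ)/3) ^ B := by
  have hgeo : Summable fun k : ℕ => ((1:ℝ)/3)^k :=
    summable_geometric_of_lt_one (by norm_num) (by norm_num)
  have hs1 : Summable (fun k : ℕ => ((1:ℝ)/3) ^ (B + k + 1)) := by
    have h := hgeo.mul_left (((1:ℝ)/3)^(B+1))
    refine h.congr fun k => ?_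
    rw [← pow_add]
    congr 1
    omega
  have hs2 : Summable (fun k => ((1:ℝ)/3) ^ (c k)) :=
    summable_pow_le c (fun k => by have := hc k; omega)
  have h1 : ∑' k, ((1:ℝ)/3)^(c k) ≤ ∑' k : ℕ, ((1:ℝ)/3)^(B+k+1) :=
    Summable.tsum_le_tsum (fun k => pow_le_pow_of_le_one (by norm_num) (by norm_num) (hc k)) hs2 hs1
  have h2 : ∑' k : ℕ, ((1:ℝ)/3)^(B+k+1) = (1/2) * ((1:ℝ)/3)^B := by
    have he : ∀ k:ℕ, ((1:ℝ)/3)^(B+k+1) = ((1:ℝ)/3)^(B+1) * ((1:ℝ)/3)^k := by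
      intro k; rw [← pow_add]; congr 1; omega
    rw [tsum_congr he, tsum_mul_left,
      tsum_geometric_of_lt_one (by norm_num) (by norm_num)]
    rw [pow_succ]
    ring
  linarith

lemma emb_split (u : ℕ → ℕ) (K : ℕ) :
    emb u = (∑ k ∈ Finset.range K, ((1:ℝ)/3) ^ (SS u (k+1)))
      + ∑' k, ((1:ℝ)/3) ^ (SS u (k+K+1)) := by
  exact (Summable.sum_add_tsum_nat_add (f := fun k => ((1:ℝ)/3) ^ (SS u (k+1))) K (emb_summable u)).symm

lemma tail_nonneg (u : ℕ → ℕ) (K : ℕ) :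
    0 ≤ ∑' k, ((1:ℝ)/3) ^ (SS u (k+K+1)) :=
  tsum_nonneg fun k => by positivity

lemma tail_le (u : ℕ → ℕ) (K : ℕ) :
    ∑' k, ((1:ℝ)/3) ^ (SS u (k+K+1)) ≤ (1/2) * ((1:ℝ)/3) ^ K :=
  geom_tail_le _ K (fun k => by have := le_SS u (k+K+1); omega)

lemma emb_dist_le (u v : ℕ → ℕ) (K : ℕ) (h : ∀ i < K, u i = v i) :
    |emb u - emb v| ≤ ((1:ℝ)/3) ^ K := by
  have hhead : ∀ k ∈ Finset.range K,
      ((1:ℝ)/3)^(SS u (k+1)) = ((1:ℝ)/3)^(SS v (k+1)) := by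
    intro k hk
    rw [SS_congr (fun i hi => h i (by have := Finset.mem_range.mp hk; omega))]
  have heq : emb u - emb v
      = (∑' k, ((1:ℝ)/3)^(SS u (k+K+1))) - ∑' k, ((1:ℝ)/3)^(SS v (k+K+1)) := by
    rw [emb_split u K, emb_split v K, Finset.sum_congr rfl hhead]; ring
  have h1 := tail_le u K
  have h2 := tail_le v K
  have h3 := tail_nonneg u K
  have h4 := tail_nonneg v K
  have h5 : (0:ℝ) ≤ ((1:ℝ)/3)^K := by positivity
  rw [heq, abs_le]
  constructor <;> linarith

lemma emb_sep (u v : ℕ → ℕ) (d : ℕ) (hagree : ∀ i < d, u i = v i) (hlt : u d < v d) :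
    (1/2) * ((1:ℝ)/3) ^ (SS u (d+1)) ≤ emb u - emb v := by
  have hhead : ∀ k ∈ Finset.range d,
      ((1:ℝ)/3)^(SS u (k+1)) = ((1:ℝ)/3)^(SS v (k+1)) := by
    intro k hk
    rw [SS_congr (fun i hi => hagree i (by have := Finset.mem_range.mp hk; omega))]
  have heq : emb u - emb v
      = (∑' k, ((1:ℝ)/3)^(SS u (k+d+1))) - ∑' k, ((1:ℝ)/3)^(SS v (k+d+1)) := by
    rw [emb_split u d, emb_split v d, Finset.sum_congr rfl hhead]; ring
  have hfirst : ((1:ℝ)/3)^(SS u (d+1)) ≤ ∑' k, ((1:ℝ)/3)^(SS u (k+d+1)) := by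
    have := Summable.le_tsum (tail_summable u d) 0 (fun j _ => by positivity)
    simpa using this
  have hSSd : SS u (d+1) + 1 ≤ SS v (d+1) := by
    have h1 : SS u d = SS v d := SS_congr hagree
    have h2 := SS_succ u d
    have h3 := SS_succ v d
    omega
  have htailv : ∑' k, ((1:ℝ)/3)^(SS v (k+d+1)) ≤ (1/2) * ((1:ℝ)/3)^(SS u (d+1)) := by
    apply geom_tail_le
    intro k
    have h3 := SS_add_le v (d+1) k
    have h4 : SS v (k+d+1) = SS v (d+1+k) := by rw [show k+d+1 = d+1+k from by omega]
    omega
  rw [heq]; linarith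

lemma prefix_of_close {u v : ℕ → ℕ} {m : ℕ}
    (h : |emb u - emb v| < (1/2) * ((1:ℝ)/3) ^ (SS u m)) : ∀ i < m, u i = v i := by
  by_contra hcon
  push_neg at hcon
  obtain ⟨i0, hi0m, hi0⟩ := hcon
  have hex : ∃ i, u i ≠ v i := ⟨i0, hi0⟩
  classical
  set d := Nat.find hex with hd
  have hdm : d < m := lt_of_le_of_lt (Nat.find_le hi0) hi0m
  have hdne : u d ≠ v d := Nat.find_spec hex
  have hagree : ∀ i < d, u i = v i := fun i hi => by
    by_contra hne
    have : d ≤ i := Nat.find_le hne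
    omega
  have hmono : ((1:ℝ)/3) ^ (SS u m) ≤ ((1:ℝ)/3) ^ (SS u (d+1)) :=
    pow_le_pow_of_le_one (by norm_num) (by norm_num) (SS_mono u (by omega))
  rcases Nat.lt_or_ge (u d) (v d) with hlt | hge
  · have hsep := emb_sep u v d hagree hlt
    have := le_abs_self (emb u - emb v)
    linarith
  · have hlt' : v d < u d := by omega
    have hsep := emb_sep v u d (fun i hi => (hagree i hi).symm) hlt'
    have hvd : SS v (d+1) ≤ SS u m := by
      have h1 : SS u d = SS v d := SS_congr hagree
      have h2 := SS_succ u d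
      have h3 := SS_succ v d
      have h4 : SS u (d+1) ≤ SS u m := SS_mono u (by omega)
      omega
    have hmono2 : ((1:ℝ)/3) ^ (SS u m) ≤ ((1:ℝ)/3) ^ (SS v (d+1)) :=
      pow_le_pow_of_le_one (by norm_num) (by norm_num) hvd
    have habs : emb v - emb u ≤ |emb u - emb v| := by
      rw [abs_sub_comm]; exact le_abs_self _
    linarith

lemma emb_injective : Function.Injective emb := by
  intro u v huv
  by_contra hne
  have hex : ∃ i, u i ≠ v i := by
    by_contra hno; push_neg at hno; exact hne (funext hno)
  obtain ⟨i, hi⟩ := hex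
  have h : ∀ j < i + 1, u j = v j := by
    apply prefix_of_close (m := i+1)
    rw [huv, sub_self, abs_zero]
    positivity
  exact hi (h i (by omega))

end MNH
namespace MNH

open scoped Classical

/-! ### The block construction -/

def listToFun (s : List ℕ) : ℕ → ℕ := fun n => s.getD n 0

def blkA (f : ℕ → ℕ) (s : List ℕ) : List ℕ :=
  s ++ List.replicate (f (Encodable.encode s) + 1) 0

def blkB (f : ℕ → ℕ) (s : List ℕ) : List ℕ :=
  blkA f s ++ [f (Encodable.encode (blkA f s)) + 1]

def blk (f : ℕ → ℕ) : ℕ → List ℕ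
  | 0 => []
  | (k+1) => blkB f (blk f k)

/-- The sparse function attached to `f`. -/
def wfn (f : ℕ → ℕ) : ℕ → ℕ := fun n => (blk f (n+1)).getD n 0

lemma blkA_length (f : ℕ → ℕ) (s : List ℕ) :
    (blkA f s).length = s.length + (f (Encodable.encode s) + 1) := by
  simp [blkA]

lemma blk_succ (f : ℕ → ℕ) (k : ℕ) :
    blk f (k+1) = blkA f (blk f k) ++ [f (Encodable.encode (blkA f (blk f k))) + 1] := rfl

lemma blk_succ_length (f : ℕ → ℕ) (k : ℕ) :
    (blk f (k+1)).length = (blkA f (blk f k)).length + 1 := by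
  rw [blk_succ, List.length_append]; rfl

lemma blk_len_lt (f : ℕ → ℕ) (k : ℕ) : (blk f k).length < (blk f (k+1)).length := by
  rw [blk_succ_length, blkA_length]; omega

lemma blk_len_ge (f : ℕ → ℕ) : ∀ k, k ≤ (blk f k).length
  | 0 => Nat.zero_le _
  | (k+1) => by have h1 := blk_len_ge f k; have h2 := blk_len_lt f k; omega

lemma blk_len_strictMono (f : ℕ → ℕ) : StrictMono (fun k => (blk f k).length) :=
  strictMono_nat_of_lt_succ (blk_len_lt f)

lemma blkA_prefix (f : ℕ → ℕ) (k : ℕ) : blkA f (blk f k) <+: blk f (k+1) := by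
  rw [blk_succ]; exact List.prefix_append _ _

lemma blk_prefix (f : ℕ → ℕ) (k : ℕ) : blk f k <+: blk f (k+1) :=
  (List.prefix_append _ _).trans (blkA_prefix f k)

lemma blk_prefix_le (f : ℕ → ℕ) {k l : ℕ} (h : k ≤ l) : blk f k <+: blk f l := by
  induction l with
  | zero => rw [Nat.le_zero.mp h]
  | succ l ih =>
    rcases Nat.lt_or_ge k (l+1) with h' | h'
    · exact (ih (by omega)).trans (blk_prefix f l)
    · rw [show k = l + 1 from by omega]

lemma getD_prefix {l L : List ℕ} (h : l <+: L) {n : ℕ} (hn : n < l.length) :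
    L.getD n 0 = l.getD n 0 := by
  obtain ⟨t, rfl⟩ := h
  exact List.getD_append _ _ _ _ hn

lemma wfn_eq_getD (f : ℕ → ℕ) {l : List ℕ} {k : ℕ} (hl : l <+: blk f k) {n : ℕ}
    (hn : n < l.length) : wfn f n = l.getD n 0 := by
  have h1 : l <+: blk f (max k (n+1)) := hl.trans (blk_prefix_le f (le_max_left _ _))
  have h2 : blk f (n+1) <+: blk f (max k (n+1)) := blk_prefix_le f (le_max_right _ _)
  have hn2 : n < (blk f (n+1)).length := lt_of_lt_of_le (Nat.lt_succ_self n) (blk_len_ge f (n+1))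
  show (blk f (n+1)).getD n 0 = l.getD n 0
  rw [← getD_prefix h2 hn2, getD_prefix h1 hn]

lemma wfn_agree (f : ℕ → ℕ) (k : ℕ) :
    ∀ j < (blkA f (blk f k)).length, wfn f j = listToFun (blk f k) j := by
  intro j hj
  rw [wfn_eq_getD f (blkA_prefix f k) hj]
  unfold blkA listToFun
  by_cases hjs : j < (blk f k).length
  · rw [List.getD_append _ _ _ _ hjs]
  · push_neg at hjs
    rw [List.getD_append_right _ _ _ _ hjs, List.getD_eq_default _ _ hjs]
    rcases Nat.lt_or_ge (j - (blk f k).length) (f (Encodable.encode (blk f k)) + 1) with h' | h'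
    · simp [List.getD_eq_getElem?_getD, List.getElem?_replicate, h']
    · rw [List.getD_eq_default]
      simpa using h'

lemma wfn_driver (f : ℕ → ℕ) (k : ℕ) :
    wfn f ((blkA f (blk f k)).length) = f (Encodable.encode (blkA f (blk f k))) + 1 := by
  have hn : (blkA f (blk f k)).length < (blk f (k+1)).length := by
    rw [blk_succ_length]; omega
  rw [wfn_eq_getD f (List.prefix_rfl (l := blk f (k+1))) hn, blk_succ,
    List.getD_append_right _ _ _ _ le_rfl]
  simp

lemma blkA_len_strictMono (f : ℕ → ℕ) :
    StrictMono (fun k => (blkA f (blk f k)).length) := by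
  apply strictMono_nat_of_lt_succ
  intro k
  have h1 : (blkA f (blk f k)).length < (blk f (k+1)).length := by
    rw [blk_succ_length]; omega
  have h2 : (blk f (k+1)).length ≤ (blkA f (blk f (k+1))).length := by
    rw [blkA_length]; omega
  omega

lemma encode_blk_injective (f : ℕ → ℕ) :
    Function.Injective (fun k => Encodable.encode (blk f k)) := by
  intro a b hab
  have h := Encodable.encode_injective hab
  exact (blk_len_strictMono f).injective (congrArg List.length h)

lemma encode_blkA_injective (f : ℕ → ℕ) :
    Function.Injective (fun k => Encodable.encode (blkA f (blk f k))) := by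
  intro a b hab
  have h := Encodable.encode_injective hab
  exact (blkA_len_strictMono f).injective (congrArg List.length h)

lemma exists_big {g : ℕ → ℕ} (h : Function.Injective g) (C N : ℕ) :
    ∃ k, N ≤ k ∧ C ≤ g k := by
  have hfin : ({k | g k < C} : Set ℕ).Finite := by
    have : ({k | g k < C} : Set ℕ) = g ⁻¹' (Set.Iio C) := rfl
    rw [this]
    exact Set.Finite.preimage (Set.injOn_of_injective h) (Set.finite_Iio C)
  have hfin2 : (({k | g k < C} : Set ℕ) ∪ Set.Iio N).Finite := hfin.union (Set.finite_Iio N)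
  obtain ⟨k, hk⟩ := hfin2.infinite_compl.nonempty
  simp only [Set.mem_compl_iff, Set.mem_union, Set.mem_setOf_eq, Set.mem_Iio, not_or,
    not_lt] at hk
  exact ⟨k, hk.2, hk.1⟩

/-- (P1): if `f` eventually dominates `c ↦ g (|decode c|)` then `wfn f` is not
eventually below `g`. -/
lemma wfn_unbounded (f g : ℕ → ℕ)
    (hdom : EvLE (fun c => g ((Denumerable.ofNat (List ℕ) c).length)) f) :
    ¬ EvLE (wfn f) g := by
  rw [EvLE, Filter.eventually_atTop] at hdom
  obtain ⟨C, hC⟩ := hdom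
  intro hev
  rw [EvLE, Filter.eventually_atTop] at hev
  obtain ⟨N, hN⟩ := hev
  obtain ⟨k, hkN, hkC⟩ := exists_big (encode_blkA_injective f) C N
  set t := blkA f (blk f k) with ht
  have hlen : N ≤ t.length := by
    have h1 := blk_len_ge f k
    have h2 : (blk f k).length ≤ t.length := by rw [ht, blkA_length]; omega
    omega
  have hdrv := wfn_driver f k
  rw [← ht] at hdrv
  have hgle : g t.length ≤ f (Encodable.encode t) := by
    have := hC _ hkC
    rwa [Denumerable.ofNat_encode] at this
  have := hN t.length hlen
  rw [hdrv] at this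
  omega

/-- (P2) helper: if `f (encode (blk f k)) ≥ K` then `wfn f` agrees with the padded list
`blk f k` on the first `K` coordinates. -/
lemma wfn_agree_of_big (f : ℕ → ℕ) (k K : ℕ) (hbig : K ≤ f (Encodable.encode (blk f k)) + 1) :
    ∀ j < K, wfn f j = listToFun (blk f k) j := by
  intro j hj
  apply wfn_agree
  rw [blkA_length]
  omega

end MNH
namespace MNH

open scoped Classical

/-- Under the hypothesis that all families of size < 𝔡 are bounded, there is a
"scale": a dominating family such that for every `φ`, the set of indices not
eventually dominating `φ` is small. -/
lemma exists_scale (hb : ∀ T : Set (ℕ → ℕ), #T < dd → ∃ g, ∀ f ∈ T, EvLE f g) :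
    ∃ (ι : Type) (F : ι → ℕ → ℕ), (∀ g, ∃ i, EvLE g (F i)) ∧
      (∀ φ, #{i | ¬ EvLE φ (F i)} < dd) := by
  obtain ⟨D, hDdom, hDcard⟩ := exists_dom_card
  obtain ⟨r, wo, hr⟩ := Cardinal.ord_eq ↥D
  haveI := wo
  have hseg : ∀ i : ↥D, #{j // r j i} < dd := by
    intro i
    have h3 := Ordinal.typein_lt_type r i
    rw [← hr] at h3
    have h4 := Cardinal.lt_ord.mp h3
    rw [hDcard] at h4
    rw [← Ordinal.card_typein]
    exact h4
  have key : ∀ (i : ↥D) (IH : ∀ j, r j i → (ℕ → ℕ)), ∃ gb : ℕ → ℕ,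
      (∀ j (h : r j i), EvLE (IH j h) gb) ∧ EvLE (↑i) gb := by
    intro i IH
    set T : Set (ℕ → ℕ) :=
      (Set.range fun p : {j // r j i} => IH p.1 p.2) ∪ {((i : ℕ → ℕ))} with hT
    have hTcard : #T < dd := by
      have h1 : #T ≤ #↥(Set.range fun p : {j // r j i} => IH p.1 p.2) + 1 := by
        rw [hT]
        refine le_trans (Cardinal.mk_union_le _ _) ?_
        simp
      have h2 : #↥(Set.range fun p : {j // r j i} => IH p.1 p.2) ≤ #{j // r j i} :=
        Cardinal.mk_range_le
      have h3 : (1 : Cardinal) < dd := lt_of_lt_of_le Cardinal.one_lt_aleph0 aleph0_le_dd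
      exact lt_of_le_of_lt h1
        (Cardinal.add_lt_of_lt aleph0_le_dd (lt_of_le_of_lt h2 (hseg i)) h3)
    obtain ⟨g0, hg0⟩ := hb T hTcard
    refine ⟨g0, fun j h => hg0 _ (Or.inl ⟨⟨j, h⟩, rfl⟩), hg0 _ (Or.inr rfl)⟩
  have wf : WellFounded r := (wo.toIsWellFounded).wf
  set G : ↥D → ℕ → ℕ := wf.fix (fun i IH => (key i IH).choose) with hG
  have hGeq : ∀ i, G i = (key i (fun j _ => G j)).choose := fun i => wf.fix_eq _ i
  have hGspec : ∀ i : ↥D, (∀ j (h : r j i), EvLE (G j) (G i)) ∧ EvLE (↑i) (G i) := by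
    intro i
    have h := (key i (fun j _ => G j)).choose_spec
    rw [← hGeq i] at h
    exact h
  refine ⟨↥D, G, ?_, ?_⟩
  · intro g
    obtain ⟨d, hd, hgd⟩ := hDdom g
    exact ⟨⟨d, hd⟩, hgd.trans'' ((hGspec ⟨d, hd⟩).2)⟩
  · intro φ
    obtain ⟨d, hd, hφd⟩ := hDdom φ
    set i0 : ↥D := ⟨d, hd⟩ with hi0
    have hφ0 : EvLE φ (G i0) := hφd.trans'' ((hGspec i0).2)
    have hsub : {i | ¬ EvLE φ (G i)} ⊆ {i | r i i0} := by
      intro i hi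
      by_contra hri
      rcases trichotomous_of r i i0 with h | h | h
      · exact hri h
      · exact hi (h ▸ hφ0)
      · exact hi (hφ0.trans'' ((hGspec i).1 i0 h))
    have h1 : #{i | ¬ EvLE φ (G i)} ≤ #{i | r i i0} := Cardinal.mk_le_mk_of_subset hsub
    have h2 : #{i | r i i0} = #{j // r j i0} := rfl
    rw [h2] at h1
    exact lt_of_le_of_lt h1 (hseg i0)

end MNH
namespace MNH

open scoped Classical

/-- Any embedded set whose preimage family is unbounded fails the Hurewicz property. -/
lemma not_hurewicz (S : Set (ℕ → ℕ)) (hub : ∀ g, ∃ u ∈ S, ¬ EvLE u g) :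
    ¬ HurewiczProp ↥(emb '' S) := by
  intro hH
  classical
  set V : ℕ → ℕ → Set ℝ := fun n m =>
    ⋃ u ∈ {u | u ∈ S ∧ SS u (n+1) ≤ m},
      Metric.ball (emb u) ((1/2) * ((1:ℝ)/3) ^ (SS u m)) with hV
  set U : ℕ → Set (Set ↥(emb '' S)) := fun n =>
    {T | ∃ m, T = Subtype.val ⁻¹' V n m} with hU
  have hUvalid : ∀ n, (∀ s ∈ U n, IsOpen s) ∧ ⋃₀ U n = Set.univ := by
    intro n
    constructor
    · rintro T ⟨m, rfl⟩
      apply IsOpen.preimage continuous_subtype_val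
      exact isOpen_biUnion fun u _ => Metric.isOpen_ball
    · apply Set.eq_univ_of_forall
      rintro ⟨x, hx⟩
      obtain ⟨u, huS, hux⟩ := hx
      refine ⟨Subtype.val ⁻¹' V n (SS u (n+1)), ⟨SS u (n+1), rfl⟩, ?_⟩
      show x ∈ V n (SS u (n+1))
      rw [hV]
      refine Set.mem_biUnion ⟨huS, le_rfl⟩ ?_
      rw [← hux]
      exact Metric.mem_ball_self (by positivity)
  obtain ⟨F, hFsub, hFcov⟩ := hH U hUvalid
  set g : ℕ → ℕ := fun n =>
    ((hFsub n).2.toFinset.sup fun T => sInf {m | T = Subtype.val ⁻¹' V n m}) with hg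
  obtain ⟨u, huS, hu⟩ := hub g
  apply hu
  have hx : emb u ∈ emb '' S := Set.mem_image_of_mem _ huS
  filter_upwards [hFcov ⟨emb u, hx⟩] with n hn
  obtain ⟨T, hTF, hxT⟩ := hn
  have hTm : ∃ m, T = Subtype.val ⁻¹' V n m := (hFsub n).1 hTF
  set m := sInf {m | T = Subtype.val ⁻¹' V n m} with hm
  have hmspec : T = Subtype.val ⁻¹' V n m := Nat.sInf_mem hTm
  have hmg : m ≤ g n := by
    rw [hg]
    exact Finset.le_sup (f := fun T => sInf {m | T = Subtype.val ⁻¹' V n m})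
      ((hFsub n).2.mem_toFinset.mpr hTF)
  rw [hmspec] at hxT
  have hxV : emb u ∈ V n m := hxT
  rw [hV] at hxV
  obtain ⟨u', hu'mem, hball⟩ := Set.mem_iUnion₂.mp hxV
  obtain ⟨hu'S, hu'le⟩ := hu'mem
  have hdist : |emb u' - emb u| < (1/2) * ((1:ℝ)/3)^(SS u' m) := by
    have h1 := Metric.mem_ball.mp hball
    rw [Real.dist_eq, abs_sub_comm] at h1
    exact h1
  have hagree : ∀ i < m, u' i = u i := prefix_of_close hdist
  have hn1m : n + 1 ≤ m := le_trans (le_SS u' (n+1)) hu'le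
  have hSSeq : SS u (n+1) = SS u' (n+1) :=
    SS_congr (fun i hi => (hagree i (by omega)).symm)
  have hlt := lt_SS u n
  omega

/-- Concentration criterion for the Menger property of an embedded set. -/
lemma menger (S : Set (ℕ → ℕ)) (q : ℕ → ℕ → ℕ) (hq : ∀ i, q i ∈ S)
    (conc : ∀ V : Set ℝ, IsOpen V → (∀ i, emb (q i) ∈ V) →
      ∃ T : Set (ℕ → ℕ), #T < dd ∧ ∀ u ∈ S, emb u ∉ V → u ∈ T) :
    MengerProp ↥(emb '' S) := by
  classical
  intro U hU
  have hsub : ∀ n, ∃ v : ℕ → Set ↥(emb '' S), (∀ j, v j ∈ U n) ∧ (⋃ j, v j) = Set.univ := by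
    intro n
    obtain ⟨T, hTc, hTsub, hTun⟩ :=
      TopologicalSpace.isOpen_sUnion_countable (U n) (hU n).1
    have hTun' : ⋃₀ T = Set.univ := by rw [hTun, (hU n).2]
    have hTne : T.Nonempty := by
      have hx : (⟨emb (q 0), Set.mem_image_of_mem _ (hq 0)⟩ : ↥(emb '' S)) ∈ ⋃₀ T := by
        rw [hTun']; trivial
      obtain ⟨t, ht, _⟩ := hx
      exact ⟨t, ht⟩
    obtain ⟨v, hv⟩ := hTc.exists_eq_range hTne
    refine ⟨v, fun j => hTsub (hv ▸ Set.mem_range_self j), ?_⟩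
    rw [← Set.sUnion_range, ← hv, hTun']
  choose vv hvvU hvvun using hsub
  have hTe : ∀ i : ℕ, ∃ Te ∈ U (2*i),
      (⟨emb (q i), Set.mem_image_of_mem _ (hq i)⟩ : ↥(emb '' S)) ∈ Te := by
    intro i
    have hx : (⟨emb (q i), Set.mem_image_of_mem _ (hq i)⟩ : ↥(emb '' S)) ∈ ⋃₀ U (2*i) := by
      rw [(hU (2*i)).2]; trivial
    obtain ⟨t, ht, hxt⟩ := hx
    exact ⟨t, ht, hxt⟩
  choose Te hTeU hTeMem using hTe
  have hUXopen : IsOpen (⋃ i, Te i) := isOpen_iUnion fun i => (hU (2*i)).1 _ (hTeU i)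
  obtain ⟨V, hVopen, hVeq⟩ := isOpen_induced_iff.mp hUXopen
  have hqV : ∀ i, emb (q i) ∈ V := by
    intro i
    have h1 : (⟨emb (q i), Set.mem_image_of_mem _ (hq i)⟩ : ↥(emb '' S)) ∈ ⋃ i, Te i :=
      Set.mem_iUnion.mpr ⟨i, hTeMem i⟩
    rw [← hVeq] at h1
    exact h1
  obtain ⟨T, hTcard, hTmem⟩ := conc V hVopen hqV
  have hfind : ∀ (x : ↥(emb '' S)) (k : ℕ), ∃ m, x ∈ vv (2*k+1) m := by
    intro x k
    have hx : x ∈ ⋃ j, vv (2*k+1) j := by rw [hvvun (2*k+1)]; trivial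
    exact Set.mem_iUnion.mp hx
  set hfun : ↥(emb '' S) → ℕ → ℕ := fun x k => Nat.find (hfind x k) with hfn
  set ψ : (ℕ → ℕ) → ℕ → ℕ :=
    fun u => if h : emb u ∈ emb '' S then hfun ⟨emb u, h⟩ else (fun _ => 0) with hψ
  have hΦcard : #↥(ψ '' T) < dd := lt_of_le_of_lt Cardinal.mk_image_le hTcard
  have hHex : ∃ H : ℕ → ℕ, ∀ φ ∈ ψ '' T, ¬ EvLE H φ := by
    by_contra hcon
    push_neg at hcon
    exact not_dom_of_lt hΦcard (fun gg => hcon gg)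
  obtain ⟨H, hH⟩ := hHex
  set F : ℕ → Set (Set ↥(emb '' S)) := fun n =>
    if n % 2 = 0 then {Te (n / 2)} else (vv n) '' (Set.Iic (H (n / 2))) with hF
  refine ⟨F, ?_, ?_⟩
  · intro n
    by_cases hpar : n % 2 = 0
    · rw [hF]
      simp only [if_pos hpar]
      constructor
      · intro T' hT'
        rw [Set.mem_singleton_iff] at hT'
        subst hT'
        have h2 : 2 * (n / 2) = n := by omega
        have := hTeU (n / 2)
        rwa [h2] at this
      · exact Set.finite_singleton _
    · rw [hF]
      simp only [if_neg hpar]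
      constructor
      · rintro T' ⟨j, _, rfl⟩
        exact hvvU n j
      · exact (Set.finite_Iic _).image _
  · apply Set.eq_univ_of_forall
    intro x
    obtain ⟨u, huS, hux⟩ := x.2
    by_cases hV' : emb u ∈ V
    · have hxUX : x ∈ ⋃ i, Te i := by
        rw [← hVeq]
        show (x : ℝ) ∈ V
        rw [← hux]
        exact hV'
      obtain ⟨i, hxi⟩ := Set.mem_iUnion.mp hxUX
      refine Set.mem_iUnion.mpr ⟨2*i, Set.mem_sUnion.mpr ⟨Te i, ?_, hxi⟩⟩
      rw [hF]
      have hpar : (2*i) % 2 = 0 := by omega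
      simp only [if_pos hpar]
      have h2 : (2*i) / 2 = i := by omega
      rw [h2]
      rfl
    · have huT : u ∈ T := hTmem u huS hV'
      have hφ := hH (ψ u) (Set.mem_image_of_mem _ huT)
      have hmem : emb u ∈ emb '' S := Set.mem_image_of_mem _ huS
      have hxeq : (⟨emb u, hmem⟩ : ↥(emb '' S)) = x := Subtype.ext hux
      have hψu : ψ u = hfun x := by
        rw [hψ]
        simp only [dif_pos hmem]
        rw [hxeq]
      rw [hψu] at hφ
      have hkex : ∃ k, hfun x k ≤ H k := by
        rw [EvLE, Filter.not_eventually] at hφ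
        obtain ⟨k, hk⟩ := hφ.exists
        exact ⟨k, by omega⟩
      obtain ⟨k, hk⟩ := hkex
      refine Set.mem_iUnion.mpr ⟨2*k+1, Set.mem_sUnion.mpr
        ⟨vv (2*k+1) (hfun x k), ?_, ?_⟩⟩
      · rw [hF]
        have hpar : (2*k+1) % 2 ≠ 0 := by omega
        simp only [if_neg hpar]
        refine ⟨hfun x k, ?_, rfl⟩
        have h2 : (2*k+1) / 2 = k := by omega
        rw [h2]
        exact hk
      · exact Nat.find_spec (hfind x k)

end MNH
namespace MNH

open scoped Classical

lemma main : ∃ X : Set ℝ, MengerProp ↥X ∧ ¬ HurewiczProp ↥X := by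
  classical
  by_cases hb : ∀ T : Set (ℕ → ℕ), #T < dd → ∃ g, ∀ f ∈ T, EvLE f g
  · -- “𝔟 = 𝔡” case: use a scale and the sparse block functions
    obtain ⟨ι, G, hGdom, hGsmall⟩ := exists_scale hb
    set q : ℕ → ℕ → ℕ := fun i => listToFun (Denumerable.ofNat (List ℕ) i) with hqdef
    set S : Set (ℕ → ℕ) := Set.range q ∪ Set.range (fun i : ι => wfn (G i)) with hS
    refine ⟨emb '' S, ?_, ?_⟩
    · apply menger S q (fun i => Or.inl (Set.mem_range_self i))
      intro V hV hqV
      have hsV : ∀ s : List ℕ, emb (listToFun s) ∈ V := by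
        intro s
        have h := hqV (Encodable.encode s)
        rw [hqdef] at h
        simpa [Denumerable.ofNat_encode] using h
      have hKs : ∀ s : List ℕ, ∃ K : ℕ,
          ∀ u : ℕ → ℕ, (∀ j < K, u j = listToFun s j) → emb u ∈ V := by
        intro s
        obtain ⟨ε, hε, hball⟩ := Metric.isOpen_iff.mp hV _ (hsV s)
        obtain ⟨K, hK⟩ := exists_pow_lt_of_lt_one hε (by norm_num : (1:ℝ)/3 < 1)
        refine ⟨K, fun u hu => hball ?_⟩
        rw [Metric.mem_ball, Real.dist_eq]
        exact lt_of_le_of_lt (emb_dist_le u (listToFun s) K hu) hK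
      choose mz hmz using hKs
      refine ⟨(fun i => wfn (G i)) ''
        {i | ¬ EvLE (fun c => mz (Denumerable.ofNat (List ℕ) c)) (G i)},
        lt_of_le_of_lt Cardinal.mk_image_le (hGsmall _), ?_⟩
      rintro u hu huV
      rw [hS] at hu
      rcases hu with ⟨i, rfl⟩ | ⟨i, rfl⟩
      · refine absurd ?_ huV
        rw [hqdef]
        exact hsV (Denumerable.ofNat (List ℕ) i)
      · refine ⟨i, ?_, rfl⟩
        intro hEv
        rw [EvLE, Filter.eventually_atTop] at hEv
        obtain ⟨C, hC⟩ := hEv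
        obtain ⟨k, -, hkC⟩ := exists_big (encode_blk_injective (G i)) C 0
        have h1 : mz (blk (G i) k) ≤ G i (Encodable.encode (blk (G i) k)) := by
          have h := hC _ hkC
          rwa [Denumerable.ofNat_encode] at h
        have h2 := wfn_agree_of_big (G i) k (mz (blk (G i) k)) (by omega)
        exact huV (hmz (blk (G i) k) _ h2)
    · apply not_hurewicz
      intro g
      obtain ⟨i, hi⟩ := hGdom (fun c => g ((Denumerable.ofNat (List ℕ) c).length))
      refine ⟨wfn (G i), ?_, wfn_unbounded (G i) g hi⟩
      rw [hS]
      exact Or.inr ⟨i, rfl⟩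
  · -- “𝔟 < 𝔡” case: a small unbounded family
    push_neg at hb
    obtain ⟨T0, hT0card, hT0⟩ := hb
    obtain ⟨f0, hf0, -⟩ := hT0 (fun _ => 0)
    refine ⟨emb '' T0, ?_, not_hurewicz T0 hT0⟩
    apply menger T0 (fun _ => f0) (fun _ => hf0)
    intro V _ _
    exact ⟨T0, hT0card, fun u hu _ => hu⟩

end MNH

/-- there is (in ZFC) a set of reals which is Menger but not Hurewicz. -/
theorem exists_menger_not_hurewicz :
    ∃ X : Set ℝ, MengerProp ↥X ∧ ¬ HurewiczProp ↥X :=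
  MNH.main
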